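/- arXiv:2402.06965 — 3 statements merged into one kernel-verified Lean document; each statement's English description precedes it below -/
import Mathlib

section
/- Suppose H⁺, H⁻ : ℝ² → ℝ² are continuously differentiable with bounded derivatives on the closed upper and lower half-planes (relative to the graph of φ) respectively, j is bounded, and for all sufficiently small Δs, Δl > 0 the circulation identity ∮_{∂ΔF} H · ds = ∫_{ΔF} j · n dA holds for the curved rectangle ΔF built over φ with half-height Δl. If further the area-averaged current (1/(2Δs))∫_{ΔF} j·n dA → 0 as Δl → 0 then Δs → 0, then H⁺(0,0)·τ = H⁻(0,0)·τ where τ = (1,0). -/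
open Set Filter Topology intervalIntegral

noncomputable section

/-- The piecewise magnetic field: `Hplus` above the graph of φ, `Hminus` below. -/
def Hfield (φ : ℝ → ℝ) (Hplus Hminus : ℝ × ℝ → ℝ × ℝ) (p : ℝ × ℝ) : ℝ × ℝ :=
  if φ p.1 ≤ p.2 then Hplus p else Hminus p

/-- The circulation ∮_{∂ΔF} H · ds over the boundary of the curved rectangle ΔF
built over the graph of φ with half-width s and half-height l, following the
parametrizations γ₁,…,γ₄ of its four edges S₁,…,S₄. -/
def circulation (φ : ℝ → ℝ) (Hplus Hminus : ℝ × ℝ → ℝ × ℝ) (s l : ℝ) : ℝ :=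
  (∫ ζ in (-l)..l, (Hfield φ Hplus Hminus (s, φ s + ζ)).2) +
  (∫ θ in (-s)..s, (-(Hfield φ Hplus Hminus (-θ, φ (-θ) + l)).1 -
      (Hfield φ Hplus Hminus (-θ, φ (-θ) + l)).2 * deriv φ (-θ))) +
  (∫ ζ in (-l)..l, -(Hfield φ Hplus Hminus (-s, φ (-s) - ζ)).2) +
  (∫ θ in (-s)..s, ((Hfield φ Hplus Hminus (θ, φ θ - l)).1 +
      (Hfield φ Hplus Hminus (θ, φ θ - l)).2 * deriv φ θ))

open MeasureTheory

lemma aux_vert (p q f : ℝ → ℝ) (hp : Continuous p) (hq : Continuous q)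
    (hfp : ∀ ζ : ℝ, 0 < ζ → f ζ = p ζ) (hfq : ∀ ζ : ℝ, ζ < 0 → f ζ = q ζ) :
    Tendsto (fun l => ∫ ζ in (-l)..l, f ζ) (𝓝[>] (0:ℝ)) (𝓝 0) := by
  have h0 : ∀ᵐ ζ : ℝ, ζ ≠ (0:ℝ) := by
    rw [MeasureTheory.ae_iff]
    simpa using Real.volume_singleton (x := (0:ℝ))
  have key : ∀ l : ℝ, 0 < l →
      (∫ ζ in (-l)..l, f ζ) = (∫ ζ in (-l)..(0:ℝ), q ζ) + ∫ ζ in (0:ℝ)..l, p ζ := by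
    intro l hl
    have hql : f =ᵐ[volume.restrict (Set.uIoc (-l) (0:ℝ))] q := by
      rw [uIoc_of_le (by linarith)]
      refine (ae_restrict_iff' measurableSet_Ioc).2 ?_
      filter_upwards [h0] with ζ hζ hmem
      exact hfq ζ (lt_of_le_of_ne hmem.2 hζ)
    have hpl : f =ᵐ[volume.restrict (Set.uIoc (0:ℝ) l)] p := by
      rw [uIoc_of_le hl.le]
      exact (ae_restrict_iff' measurableSet_Ioc).2
        (Eventually.of_forall fun ζ hmem => hfp ζ hmem.1)
    have hiq : IntervalIntegrable f volume (-l) 0 :=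
      (hq.intervalIntegrable _ _).congr_ae hql.symm
    have hip : IntervalIntegrable f volume 0 l :=
      (hp.intervalIntegrable _ _).congr_ae hpl.symm
    rw [← intervalIntegral.integral_add_adjacent_intervals hiq hip]
    congr 1
    · exact intervalIntegral.integral_congr_ae
        ((ae_restrict_iff' measurableSet_uIoc).1 hql)
    · exact intervalIntegral.integral_congr_ae
        ((ae_restrict_iff' measurableSet_uIoc).1 hpl)
  set W : ℝ → ℝ := fun l => (∫ ζ in (-l)..(0:ℝ), q ζ) + ∫ ζ in (0:ℝ)..l, p ζ with hW
  have hWc : Continuous W := by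
    have h1 : Continuous fun x : ℝ => ∫ ζ in (0:ℝ)..x, q ζ :=
      intervalIntegral.continuous_primitive (fun a b => hq.intervalIntegrable a b) 0
    have h2 : Continuous fun x : ℝ => ∫ ζ in (0:ℝ)..x, p ζ :=
      intervalIntegral.continuous_primitive (fun a b => hp.intervalIntegrable a b) 0
    have : W = fun l => -(∫ ζ in (0:ℝ)..(-l), q ζ) + ∫ ζ in (0:ℝ)..l, p ζ := by
      funext l
      rw [hW]
      simp [intervalIntegral.integral_symm (0:ℝ) (-l)]
    rw [this]
    exact ((h1.comp continuous_neg).neg).add h2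
  have hW0 : W 0 = 0 := by simp [hW]
  have : Tendsto W (𝓝[>] (0:ℝ)) (𝓝 0) := by
    have h := (hWc.tendsto 0).mono_left (nhdsWithin_le_nhds : 𝓝[>] (0:ℝ) ≤ 𝓝 0)
    rwa [hW0] at h
  refine this.congr' ?_
  filter_upwards [self_mem_nhdsWithin] with l hl
  exact (key l hl).symm

lemma aux_avg (f : ℝ → ℝ) (hf : Continuous f) :
    Tendsto (fun s => (∫ x in (-s)..s, f x) / (2 * s)) (𝓝[>] (0:ℝ)) (𝓝 (f 0)) := by
  set G : ℝ → ℝ := fun u => ∫ x in (0:ℝ)..u, f x with hGdef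
  have hG : ∀ t : ℝ, HasDerivAt G (f t) t := fun t =>
    intervalIntegral.integral_hasDerivAt_right (hf.intervalIntegrable _ _)
      hf.aestronglyMeasurable.stronglyMeasurableAtFilter hf.continuousAt
  set F : ℝ → ℝ := fun s => ∫ x in (-s)..s, f x with hFdef
  have hFG : F = fun s => G s - G (-s) := by
    funext s
    rw [hFdef, hGdef]
    simp only
    rw [eq_sub_iff_add_eq, add_comm]
    exact intervalIntegral.integral_add_adjacent_intervals
      (hf.intervalIntegrable _ _) (hf.intervalIntegrable _ _)
  have hF : HasDerivAt F (2 * f 0) 0 := by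
    rw [hFG]
    have h1 : HasDerivAt (fun s : ℝ => G (-s)) (f 0 * (-1)) 0 := by
      have hneg : HasDerivAt G (f 0) (-(0:ℝ)) := by simpa using hG 0
      have := hneg.comp (0:ℝ) (hasDerivAt_neg (0:ℝ))
      simpa [Function.comp_def] using this
    have := (hG 0).sub h1
    rw [show (2 * f 0) = f 0 - f 0 * (-1) by ring]
    exact this
  have hslope := hasDerivAt_iff_tendsto_slope.1 hF
  have hF0 : F 0 = 0 := by simp [hFdef]
  have h2 : Tendsto (fun s => slope F 0 s / 2) (𝓝[>] (0:ℝ)) (𝓝 (2 * f 0 / 2)) :=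
    (hslope.mono_left (nhdsWithin_mono 0 fun x hx => ne_of_gt hx)).div_const 2
  have h3 : (2 * f 0) / 2 = f 0 := by ring
  rw [h3] at h2
  refine h2.congr' ?_
  filter_upwards [self_mem_nhdsWithin] with s hs
  have hs' : (s:ℝ) ≠ 0 := ne_of_gt hs
  rw [slope_def_field, hF0, sub_zero, sub_zero, div_div, mul_comm s 2]

/-- Continuity of the tangential component of H across the interface when the
surface current density vanishes: if the circulation over every small curved
rectangle ΔF equals the current K through ΔF, and the area-averaged current
K/(2Δs) tends to 0 (first Δl → 0, then Δs → 0), then H⁺(0,0)·τ = H⁻(0,0)·τ. -/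
theorem stmt_3 (s₀ l₀ M C : ℝ) (hs₀ : 0 < s₀) (hl₀ : 0 < l₀) (hM : 0 < M) (hC : 0 < C)
    (φ : ℝ → ℝ) (hφ : ContDiff ℝ 2 φ) (h0 : φ 0 = 0) (h0' : deriv φ 0 = 0)
    (hφb : ∀ θ, |deriv φ θ| ≤ M ∧ |deriv (deriv φ) θ| ≤ M)
    (Hplus Hminus : ℝ × ℝ → ℝ × ℝ)
    (hHp : ContDiff ℝ 1 Hplus) (hHm : ContDiff ℝ 1 Hminus)
    (hHpb : ∀ p, ‖fderiv ℝ Hplus p‖ ≤ M) (hHmb : ∀ p, ‖fderiv ℝ Hminus p‖ ≤ M)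
    (K : ℝ → ℝ → ℝ)
    (hKb : ∀ s ∈ Ioo (0:ℝ) s₀, ∀ l ∈ Ioo (0:ℝ) l₀, |K s l| ≤ C * s * l)
    (hcirc : ∀ s ∈ Ioo (0:ℝ) s₀, ∀ l ∈ Ioo (0:ℝ) l₀,
      circulation φ Hplus Hminus s l = K s l)
    (g : ℝ → ℝ)
    (hK1 : ∀ s ∈ Ioo (0:ℝ) s₀,
      Tendsto (fun l => K s l / (2 * s)) (𝓝[>] 0) (𝓝 (g s)))
    (hK2 : Tendsto g (𝓝[>] 0) (𝓝 0)) :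
    (Hplus (0, 0)).1 = (Hminus (0, 0)).1 := by
  have hφc : Continuous φ := hφ.continuous
  have hφ' : Continuous (deriv φ) := hφ.continuous_deriv (by norm_num)
  have hpc : Continuous Hplus := hHp.continuous
  have hmc : Continuous Hminus := hHm.continuous
  set f : ℝ → ℝ := fun θ => (Hminus (θ, φ θ)).1 + (Hminus (θ, φ θ)).2 * deriv φ θ
      - (Hplus (θ, φ θ)).1 - (Hplus (θ, φ θ)).2 * deriv φ θ with hfdef
  have hfc : Continuous f := by fun_prop
  -- the top and bottom integrands as functions of (l, θ)
  set u : ℝ → ℝ → ℝ := fun l θ =>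
      -(Hplus (-θ, φ (-θ) + l)).1 - (Hplus (-θ, φ (-θ) + l)).2 * deriv φ (-θ) with hudef
  set v : ℝ → ℝ → ℝ := fun l θ =>
      (Hminus (θ, φ θ - l)).1 + (Hminus (θ, φ θ - l)).2 * deriv φ θ with hvdef
  have huc : Continuous (Function.uncurry u) := by
    simp only [hudef, Function.uncurry]; fun_prop
  have hvc : Continuous (Function.uncurry v) := by
    simp only [hvdef, Function.uncurry]; fun_prop
  have key : ∀ s ∈ Ioo (0:ℝ) s₀, g s = (∫ θ in (-s)..s, f θ) / (2 * s) := by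
    intro s hs
    -- vertical side S₁
    have hV1 : Tendsto (fun l => ∫ ζ in (-l)..l,
        (Hfield φ Hplus Hminus (s, φ s + ζ)).2) (𝓝[>] (0:ℝ)) (𝓝 0) := by
      refine aux_vert (fun ζ => (Hplus (s, φ s + ζ)).2)
        (fun ζ => (Hminus (s, φ s + ζ)).2) _ (by fun_prop) (by fun_prop) ?_ ?_
      · intro ζ hζ
        have h : φ s ≤ φ s + ζ := le_add_of_nonneg_right hζ.le
        simp [Hfield, h]
      · intro ζ hζ
        have h : ¬ φ s ≤ φ s + ζ := not_le.2 (by linarith)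
        simp [Hfield, h]
    -- vertical side S₃
    have hV2 : Tendsto (fun l => ∫ ζ in (-l)..l,
        -(Hfield φ Hplus Hminus (-s, φ (-s) - ζ)).2) (𝓝[>] (0:ℝ)) (𝓝 0) := by
      refine aux_vert (fun ζ => -(Hminus (-s, φ (-s) - ζ)).2)
        (fun ζ => -(Hplus (-s, φ (-s) - ζ)).2) _ (by fun_prop) (by fun_prop) ?_ ?_
      · intro ζ hζ
        have h : ¬ φ (-s) ≤ φ (-s) - ζ := not_le.2 (by linarith)
        simp [Hfield, h]
      · intro ζ hζ
        have h : φ (-s) ≤ φ (-s) - ζ := by linarith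
        simp [Hfield, h]
    -- top side S₂
    have hTc : Continuous fun l => ∫ θ in (-s)..s, u l θ :=
      intervalIntegral.continuous_parametric_intervalIntegral_of_continuous' huc (-s) s
    have hT : Tendsto (fun l => ∫ θ in (-s)..s,
        (-(Hfield φ Hplus Hminus (-θ, φ (-θ) + l)).1 -
          (Hfield φ Hplus Hminus (-θ, φ (-θ) + l)).2 * deriv φ (-θ)))
        (𝓝[>] (0:ℝ)) (𝓝 (∫ θ in (-s)..s, u 0 θ)) := by
      refine ((hTc.tendsto 0).mono_left nhdsWithin_le_nhds).congr' ?_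
      filter_upwards [self_mem_nhdsWithin] with l (hl : (0:ℝ) < l)
      refine intervalIntegral.integral_congr fun θ _ => ?_
      have h : φ (-θ) ≤ φ (-θ) + l := le_add_of_nonneg_right hl.le
      simp [hudef, Hfield, h]
    -- bottom side S₄
    have hBc : Continuous fun l => ∫ θ in (-s)..s, v l θ :=
      intervalIntegral.continuous_parametric_intervalIntegral_of_continuous' hvc (-s) s
    have hB : Tendsto (fun l => ∫ θ in (-s)..s,
        ((Hfield φ Hplus Hminus (θ, φ θ - l)).1 +
          (Hfield φ Hplus Hminus (θ, φ θ - l)).2 * deriv φ θ))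
        (𝓝[>] (0:ℝ)) (𝓝 (∫ θ in (-s)..s, v 0 θ)) := by
      refine ((hBc.tendsto 0).mono_left nhdsWithin_le_nhds).congr' ?_
      filter_upwards [self_mem_nhdsWithin] with l (hl : (0:ℝ) < l)
      refine intervalIntegral.integral_congr fun θ _ => ?_
      have h : ¬ φ θ ≤ φ θ - l := not_le.2 (by linarith)
      simp [hvdef, Hfield, h]
    -- circulation tends to the sum
    have hcl : Tendsto (fun l => circulation φ Hplus Hminus s l) (𝓝[>] (0:ℝ))
        (𝓝 ((∫ θ in (-s)..s, u 0 θ) + ∫ θ in (-s)..s, v 0 θ)) := by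
      have h := ((hV1.add hT).add hV2).add hB
      simp only [zero_add, add_zero] at h
      simpa only [circulation] using h
    have hKlim : Tendsto (fun l => K s l / (2 * s)) (𝓝[>] (0:ℝ))
        (𝓝 (((∫ θ in (-s)..s, u 0 θ) + ∫ θ in (-s)..s, v 0 θ) / (2 * s))) := by
      refine (hcl.div_const (2 * s)).congr' ?_
      filter_upwards [Ioo_mem_nhdsGT_of_mem ⟨le_refl (0:ℝ), hl₀⟩] with l hl
      rw [hcirc s hs l hl]
    have hgs := tendsto_nhds_unique (hK1 s hs) hKlim
    rw [hgs]
    congr 1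
    -- ∫ u 0 + ∫ v 0 = ∫ f
    have h1 : (∫ θ in (-s)..s, u 0 θ)
        = ∫ θ in (-s)..s, (-(Hplus (θ, φ θ)).1 - (Hplus (θ, φ θ)).2 * deriv φ θ) := by
      have h2 : (∫ θ in (-s)..s, u 0 θ) = ∫ θ in (-s)..s,
          (fun x => -(Hplus (x, φ x)).1 - (Hplus (x, φ x)).2 * deriv φ x) (-θ) := by
        refine intervalIntegral.integral_congr fun θ _ => ?_
        simp [hudef]
      have h2' := intervalIntegral.integral_comp_neg (a := -s) (b := s)
        (f := fun x => -(Hplus (x, φ x)).1 - (Hplus (x, φ x)).2 * deriv φ x)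
      rw [neg_neg] at h2'
      rw [h2]
      exact h2'
    have h3 : (∫ θ in (-s)..s, v 0 θ)
        = ∫ θ in (-s)..s, ((Hminus (θ, φ θ)).1 + (Hminus (θ, φ θ)).2 * deriv φ θ) := by
      refine intervalIntegral.integral_congr fun θ _ => ?_
      simp [hvdef]
    rw [h1, h3, ← intervalIntegral.integral_add ((by fun_prop : Continuous fun θ : ℝ =>
        -(Hplus (θ, φ θ)).1 - (Hplus (θ, φ θ)).2 * deriv φ θ).intervalIntegrable (-s) s)
      ((by fun_prop : Continuous fun θ : ℝ =>
        (Hminus (θ, φ θ)).1 + (Hminus (θ, φ θ)).2 * deriv φ θ).intervalIntegrable (-s) s)]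
    refine intervalIntegral.integral_congr fun θ _ => ?_
    simp only [hfdef]
    ring
  have hfin : Tendsto g (𝓝[>] (0:ℝ)) (𝓝 (f 0)) := by
    refine (aux_avg f hfc).congr' ?_
    filter_upwards [Ioo_mem_nhdsGT_of_mem ⟨le_refl (0:ℝ), hs₀⟩] with s hs
    exact (key s hs).symm
  have hf0 : f 0 = 0 := tendsto_nhds_unique hfin hK2
  rw [hfdef] at hf0
  simp only [h0, h0', mul_zero, add_zero, sub_zero] at hf0
  linarith
end
end

section
/- Let Φ : B_r(0) ⊂ ℝ² → ℝ be twice continuously differentiable with Φ(0,0) = ∂₁Φ(0,0) = ∂₂Φ(0,0) = 0 and bounded second derivatives. Let D : ℝ³ → ℝ³ be C¹ with D and ∇D bounded. Then |∫₀^{2π}∫₀^r s·D(s cos α, Φ(s cos α, s sin α) + Δl, s sin α)·(∂₁Φ, −1, ∂₂Φ)(s cos α, s sin α) ds dα − π r² D(0, Δl, 0)·(0,−1,0)| ≤ c·r³, with c independent of r and Δl. -/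
open Set Real intervalIntegral

noncomputable section

/-- Dot product on ℝ³ realized as ℝ × ℝ × ℝ. -/
def dotP (a b : ℝ × ℝ × ℝ) : ℝ := a.1 * b.1 + a.2.1 * b.2.1 + a.2.2 * b.2.2

/-- First and second partial derivatives of Φ : ℝ² → ℝ. -/
def p1 (Φ : ℝ × ℝ → ℝ) (q : ℝ × ℝ) : ℝ := fderiv ℝ Φ q (1, 0)
def p2 (Φ : ℝ × ℝ → ℝ) (q : ℝ × ℝ) : ℝ := fderiv ℝ Φ q (0, 1)

set_option maxHeartbeats 1000000 in
lemma key_est (M r₀ r s α Δl : ℝ) (hM : 0 < M) (hr₀ : 0 < r₀)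
    (hr0 : 0 < r) (hrr₀ : r ≤ r₀) (hs0 : 0 < s) (hsr : s ≤ r)
    (Φ : ℝ × ℝ → ℝ) (D : ℝ × ℝ × ℝ → ℝ × ℝ × ℝ)
    (hgrad : ∀ x : ℝ × ℝ, ‖fderiv ℝ Φ x‖ ≤ M * ‖x‖)
    (hΦval : ∀ q : ℝ × ℝ, |Φ q| ≤ M * ‖q‖ * ‖q‖)
    (hDlip : ∀ a b : ℝ × ℝ × ℝ, ‖D a - D b‖ ≤ M * ‖a - b‖)
    (hDb : ∀ p : ℝ × ℝ × ℝ, ‖D p‖ ≤ M) :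
    |s * dotP (D (s * cos α, Φ (s * cos α, s * sin α) + Δl, s * sin α))
        (p1 Φ (s * cos α, s * sin α), -1, p2 Φ (s * cos α, s * sin α)) -
      s * dotP (D (0, Δl, 0)) (0, -1, 0)|
    ≤ (2 * M ^ 2 + M * (1 + M * r₀)) * r ^ 2 := by
  set q : ℝ × ℝ := (s * cos α, s * sin α) with hq
  set P : ℝ × ℝ × ℝ := (s * cos α, Φ q + Δl, s * sin α) with hP
  set Q : ℝ × ℝ × ℝ := ((0:ℝ), Δl, (0:ℝ)) with hQ
  have hsc : |s * cos α| ≤ s := by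
    rw [abs_mul, abs_of_pos hs0]
    nlinarith [abs_cos_le_one α, abs_nonneg (cos α)]
  have hss : |s * sin α| ≤ s := by
    rw [abs_mul, abs_of_pos hs0]
    nlinarith [abs_sin_le_one α, abs_nonneg (sin α)]
  have hqn : ‖q‖ ≤ s := by
    rw [hq, Prod.norm_def]
    exact max_le hsc hss
  have hn10 : ‖((1:ℝ),(0:ℝ))‖ = 1 := by rw [Prod.norm_def]; simp
  have hn01 : ‖((0:ℝ),(1:ℝ))‖ = 1 := by rw [Prod.norm_def]; simp
  have hgq : ‖fderiv ℝ Φ q‖ ≤ M * s :=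
    le_trans (hgrad q) (by nlinarith)
  have hp1b : |p1 Φ q| ≤ M * s := by
    have h1 : |p1 Φ q| ≤ ‖fderiv ℝ Φ q‖ * ‖((1:ℝ),(0:ℝ))‖ := by
      simpa [p1, Real.norm_eq_abs] using (fderiv ℝ Φ q).le_opNorm ((1:ℝ),(0:ℝ))
    rw [hn10, mul_one] at h1
    exact h1.trans hgq
  have hp2b : |p2 Φ q| ≤ M * s := by
    have h1 : |p2 Φ q| ≤ ‖fderiv ℝ Φ q‖ * ‖((0:ℝ),(1:ℝ))‖ := by
      simpa [p2, Real.norm_eq_abs] using (fderiv ℝ Φ q).le_opNorm ((0:ℝ),(1:ℝ))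
    rw [hn01, mul_one] at h1
    exact h1.trans hgq
  have hΦq : |Φ q| ≤ M * r₀ * s := by
    calc |Φ q| ≤ M * ‖q‖ * ‖q‖ := hΦval q
      _ ≤ M * r₀ * s := by
          have h1 : ‖q‖ ≤ r₀ := hqn.trans (hsr.trans hrr₀)
          have h2 : (0:ℝ) ≤ ‖q‖ := norm_nonneg q
          have e1 : M * ‖q‖ ≤ M * r₀ := mul_le_mul_of_nonneg_left h1 hM.le
          have e2 : M * ‖q‖ * ‖q‖ ≤ M * r₀ * ‖q‖ := mul_le_mul_of_nonneg_right e1 h2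
          have e3 : M * r₀ * ‖q‖ ≤ M * r₀ * s := mul_le_mul_of_nonneg_left hqn (by positivity)
          linarith
  have hPQ : ‖P - Q‖ ≤ (1 + M * r₀) * s := by
    have hPQ' : P - Q = (s * cos α, Φ q, s * sin α) := by
      rw [hP, hQ]; simp [Prod.ext_iff]
    rw [hPQ', Prod.norm_def, Prod.norm_def]
    simp only [Real.norm_eq_abs]
    have hMr : 0 ≤ M * r₀ * s := by positivity
    refine max_le (by nlinarith) (max_le (by nlinarith) (by nlinarith))
  have hD2 : |(D P).2.1 - (D Q).2.1| ≤ M * ((1 + M * r₀) * s) := by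
    have hcomp : |(D P).2.1 - (D Q).2.1| ≤ ‖D P - D Q‖ := by
      have e1 : (D P).2.1 - (D Q).2.1 = (D P - D Q).2.1 := by simp
      rw [e1]
      calc |(D P - D Q).2.1| = ‖(D P - D Q).2.1‖ := (Real.norm_eq_abs _).symm
        _ ≤ ‖(D P - D Q).2‖ := norm_fst_le _
        _ ≤ ‖D P - D Q‖ := norm_snd_le _
    refine hcomp.trans ((hDlip P Q).trans ?_)
    nlinarith [hPQ, norm_nonneg (P - Q), hM.le]
  have hD1 : |(D P).1| ≤ M := by
    calc |(D P).1| = ‖(D P).1‖ := (Real.norm_eq_abs _).symm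
      _ ≤ ‖D P‖ := norm_fst_le _
      _ ≤ M := hDb P
  have hD3 : |(D P).2.2| ≤ M := by
    calc |(D P).2.2| = ‖(D P).2.2‖ := (Real.norm_eq_abs _).symm
      _ ≤ ‖(D P).2‖ := norm_snd_le _
      _ ≤ ‖D P‖ := norm_snd_le _
      _ ≤ M := hDb P
  have expand : s * dotP (D P) (p1 Φ q, -1, p2 Φ q) - s * dotP (D Q) (0, -1, 0)
      = s * ((D P).1 * p1 Φ q + (D P).2.2 * p2 Φ q + ((D Q).2.1 - (D P).2.1) * 1) := by
    simp only [dotP]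
    ring
  rw [expand, abs_mul, abs_of_pos hs0]
  have t1 : |(D P).1 * p1 Φ q| ≤ M * (M * s) := by
    rw [abs_mul]; exact mul_le_mul hD1 hp1b (abs_nonneg _) hM.le
  have t2 : |(D P).2.2 * p2 Φ q| ≤ M * (M * s) := by
    rw [abs_mul]; exact mul_le_mul hD3 hp2b (abs_nonneg _) hM.le
  have t3 : |((D Q).2.1 - (D P).2.1) * 1| ≤ M * ((1 + M * r₀) * s) := by
    rw [mul_one, abs_sub_comm]; exact hD2
  have habs : |(D P).1 * p1 Φ q + (D P).2.2 * p2 Φ q + ((D Q).2.1 - (D P).2.1) * 1|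
      ≤ (2 * M ^ 2 + M * (1 + M * r₀)) * s := by
    calc |(D P).1 * p1 Φ q + (D P).2.2 * p2 Φ q + ((D Q).2.1 - (D P).2.1) * 1|
        ≤ |(D P).1 * p1 Φ q + (D P).2.2 * p2 Φ q| + |((D Q).2.1 - (D P).2.1) * 1| := abs_add_le _ _
      _ ≤ (|(D P).1 * p1 Φ q| + |(D P).2.2 * p2 Φ q|) + |((D Q).2.1 - (D P).2.1) * 1| := by
          gcongr; exact abs_add_le _ _
      _ ≤ (M * (M * s) + M * (M * s)) + M * ((1 + M * r₀) * s) := by gcongr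
      _ = (2 * M ^ 2 + M * (1 + M * r₀)) * s := by ring
  calc s * |(D P).1 * p1 Φ q + (D P).2.2 * p2 Φ q + ((D Q).2.1 - (D P).2.1) * 1|
      ≤ s * ((2 * M ^ 2 + M * (1 + M * r₀)) * s) := by
        exact mul_le_mul_of_nonneg_left habs hs0.le
    _ = (2 * M ^ 2 + M * (1 + M * r₀)) * s ^ 2 := by ring
    _ ≤ (2 * M ^ 2 + M * (1 + M * r₀)) * r ^ 2 := by
        have hC : (0:ℝ) ≤ 2 * M ^ 2 + M * (1 + M * r₀) := by positivity
        have hs2 : s ^ 2 ≤ r ^ 2 := by nlinarith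
        nlinarith

set_option maxHeartbeats 1000000 in
/-- Flux estimate over the curved top face Δ_top of the cylinder C:
|∫₀^{2π}∫₀^r s·D(s cos α, Φ(s cos α, s sin α)+Δl, s sin α)·(∂₁Φ, −1, ∂₂Φ) ds dα
 − πr²·D(0,Δl,0)·(0,−1,0)| ≤ c·r³, with c independent of r and Δl. -/
theorem stmt_4 (r₀ M : ℝ) (hr₀ : 0 < r₀) (hM : 0 < M)
    (Φ : ℝ × ℝ → ℝ) (hΦ : ContDiff ℝ 2 Φ)
    (hΦ0 : Φ (0, 0) = 0) (hΦ1 : p1 Φ (0, 0) = 0) (hΦ2 : p2 Φ (0, 0) = 0)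
    (hΦb : ∀ q, ‖fderiv ℝ (fderiv ℝ Φ) q‖ ≤ M)
    (D : ℝ × ℝ × ℝ → ℝ × ℝ × ℝ) (hD : ContDiff ℝ 1 D)
    (hDb : ∀ p, ‖D p‖ ≤ M ∧ ‖fderiv ℝ D p‖ ≤ M) :
    ∃ c > 0, ∀ r ∈ Ioc 0 r₀, ∀ Δl : ℝ,
      |(∫ α in (0:ℝ)..(2 * π), ∫ s in (0:ℝ)..r,
          s * dotP (D (s * cos α, Φ (s * cos α, s * sin α) + Δl, s * sin α))
            (p1 Φ (s * cos α, s * sin α), -1, p2 Φ (s * cos α, s * sin α))) -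
        π * r ^ 2 * dotP (D (0, Δl, 0)) (0, -1, 0)| ≤ c * r ^ 3 := by
  
  -- basic differentiability facts
  have hΦd : Differentiable ℝ Φ := hΦ.differentiable two_ne_zero
  have hfd : Differentiable ℝ (fderiv ℝ Φ) :=
    (hΦ.fderiv_right (m := 1) (by norm_num)).differentiable one_ne_zero
  have hL0 : fderiv ℝ Φ (0, 0) = 0 := by
    apply ContinuousLinearMap.ext
    intro v
    have hv : v = v.1 • ((1:ℝ), (0:ℝ)) + v.2 • ((0:ℝ), (1:ℝ)) := by
      simp [Prod.ext_iff]
    rw [hv, map_add, map_smul, map_smul]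
    have h1 : fderiv ℝ Φ (0:ℝ×ℝ) (1,0) = 0 := hΦ1
    have h2 : fderiv ℝ Φ (0:ℝ×ℝ) (0,1) = 0 := hΦ2
    simp [h1, h2, Prod.mk_zero_zero]
  have hgrad : ∀ x : ℝ × ℝ, ‖fderiv ℝ Φ x‖ ≤ M * ‖x‖ := by
    intro x
    have h := Convex.norm_image_sub_le_of_norm_fderiv_le (f := fderiv ℝ Φ)
      (fun y _ => hfd y) (fun y _ => hΦb y) convex_univ (mem_univ ((0:ℝ),(0:ℝ))) (mem_univ x)
    have hL0' : fderiv ℝ Φ (0:ℝ×ℝ) = 0 := hL0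
    simpa [hL0', Prod.mk_zero_zero] using h
  have hΦval : ∀ q : ℝ × ℝ, |Φ q| ≤ M * ‖q‖ * ‖q‖ := by
    intro q
    have h := Convex.norm_image_sub_le_of_norm_fderiv_le (f := Φ) (C := M * ‖q‖)
      (fun y _ => hΦd y)
      (fun y hy => le_trans (hgrad y) (by
        have : ‖y‖ ≤ ‖q‖ := by simpa using mem_closedBall_zero_iff.mp hy
        nlinarith))
      (convex_closedBall 0 ‖q‖) (Metric.mem_closedBall_self (norm_nonneg q))
      (mem_closedBall_zero_iff.mpr le_rfl)
    have h0 : Φ 0 = 0 := by simpa [Prod.mk_zero_zero] using hΦ0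
    simpa [h0, Real.norm_eq_abs] using h
  have hDlip : ∀ a b : ℝ × ℝ × ℝ, ‖D a - D b‖ ≤ M * ‖a - b‖ := by
    intro a b
    exact Convex.norm_image_sub_le_of_norm_fderiv_le (fun y _ => hD.differentiable one_ne_zero y)
      (fun y _ => (hDb y).2) convex_univ (mem_univ b) (mem_univ a)
  -- continuity facts
  have hDc : Continuous D := hD.continuous
  have hΦc : Continuous Φ := hΦ.continuous
  have hfc : Continuous (fderiv ℝ Φ) := hΦ.continuous_fderiv two_ne_zero
  have hp1c : Continuous (p1 Φ) := hfc.clm_apply continuous_const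
  have hp2c : Continuous (p2 Φ) := hfc.clm_apply continuous_const
  set K : ℝ := 2 * M ^ 2 + M * (1 + M * r₀) with hK
  have hKpos : 0 < K := by positivity
  refine ⟨2 * π * K, by positivity, ?_⟩
  rintro r ⟨hr0, hrr₀⟩ Δl
  set c₀ : ℝ := dotP (D (0, Δl, 0)) (0, -1, 0) with hc₀
  have hgc : Continuous (fun p : ℝ × ℝ =>
      p.2 * dotP (D (p.2 * cos p.1, Φ (p.2 * cos p.1, p.2 * sin p.1) + Δl, p.2 * sin p.1))
        (p1 Φ (p.2 * cos p.1, p.2 * sin p.1), -1, p2 Φ (p.2 * cos p.1, p.2 * sin p.1))) := by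
    simp only [dotP]
    fun_prop
  have key : ∀ (α s : ℝ), 0 < s → s ≤ r →
      |s * dotP (D (s * cos α, Φ (s * cos α, s * sin α) + Δl, s * sin α))
          (p1 Φ (s * cos α, s * sin α), -1, p2 Φ (s * cos α, s * sin α)) - s * c₀|
        ≤ K * r ^ 2 := fun α s hs0 hsr =>
    key_est M r₀ r s α Δl hM hr₀ hr0 hrr₀ hs0 hsr Φ D hgrad hΦval hDlip (fun p => (hDb p).1)
  -- integrability facts
  have hinner : ∀ α : ℝ, IntervalIntegrable (fun s =>
      s * dotP (D (s * cos α, Φ (s * cos α, s * sin α) + Δl, s * sin α))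
        (p1 Φ (s * cos α, s * sin α), -1, p2 Φ (s * cos α, s * sin α))) MeasureTheory.volume 0 r := by
    intro α
    exact (hgc.comp (Continuous.prodMk_right α)).intervalIntegrable 0 r
  have houter : IntervalIntegrable (fun α => ∫ s in (0:ℝ)..r,
      s * dotP (D (s * cos α, Φ (s * cos α, s * sin α) + Δl, s * sin α))
        (p1 Φ (s * cos α, s * sin α), -1, p2 Φ (s * cos α, s * sin α))) MeasureTheory.volume 0 (2*π) := by
    refine Continuous.intervalIntegrable ?_ 0 (2*π)
    exact continuous_parametric_intervalIntegral_of_continuous' (f := fun α s =>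
      s * dotP (D (s * cos α, Φ (s * cos α, s * sin α) + Δl, s * sin α))
        (p1 Φ (s * cos α, s * sin α), -1, p2 Φ (s * cos α, s * sin α))) hgc 0 r
  -- rewrite the difference as a double integral
  have step1 : ∀ α : ℝ, (∫ s in (0:ℝ)..r,
        s * dotP (D (s * cos α, Φ (s * cos α, s * sin α) + Δl, s * sin α))
          (p1 Φ (s * cos α, s * sin α), -1, p2 Φ (s * cos α, s * sin α))) - r ^ 2 / 2 * c₀
      = ∫ s in (0:ℝ)..r,
        (s * dotP (D (s * cos α, Φ (s * cos α, s * sin α) + Δl, s * sin α))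
          (p1 Φ (s * cos α, s * sin α), -1, p2 Φ (s * cos α, s * sin α)) - s * c₀) := by
    intro α
    rw [intervalIntegral.integral_sub (g := fun s => s * c₀) (hinner α)
      ((continuous_id'.mul continuous_const).intervalIntegrable 0 r)]
    congr 1
    rw [intervalIntegral.integral_mul_const, integral_id]
    ring
  have step2 : (∫ α in (0:ℝ)..(2 * π), ∫ s in (0:ℝ)..r,
        s * dotP (D (s * cos α, Φ (s * cos α, s * sin α) + Δl, s * sin α))
          (p1 Φ (s * cos α, s * sin α), -1, p2 Φ (s * cos α, s * sin α))) -
      π * r ^ 2 * c₀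
      = ∫ α in (0:ℝ)..(2 * π), ((∫ s in (0:ℝ)..r,
        s * dotP (D (s * cos α, Φ (s * cos α, s * sin α) + Δl, s * sin α))
          (p1 Φ (s * cos α, s * sin α), -1, p2 Φ (s * cos α, s * sin α))) - r ^ 2 / 2 * c₀) := by
    rw [intervalIntegral.integral_sub houter (intervalIntegrable_const)]
    congr 1
    rw [intervalIntegral.integral_const]
    simp only [smul_eq_mul]
    ring
  rw [step2]
  have bound1 : ∀ α : ℝ, |(∫ s in (0:ℝ)..r,
        s * dotP (D (s * cos α, Φ (s * cos α, s * sin α) + Δl, s * sin α))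
          (p1 Φ (s * cos α, s * sin α), -1, p2 Φ (s * cos α, s * sin α))) - r ^ 2 / 2 * c₀|
      ≤ K * r ^ 2 * r := by
    intro α
    rw [step1 α]
    have h := intervalIntegral.norm_integral_le_of_norm_le_const (C := K * r ^ 2)
      (f := fun s => s * dotP (D (s * cos α, Φ (s * cos α, s * sin α) + Δl, s * sin α))
          (p1 Φ (s * cos α, s * sin α), -1, p2 Φ (s * cos α, s * sin α)) - s * c₀)
      (a := 0) (b := r) ?_
    · rw [Real.norm_eq_abs] at h
      calc _ ≤ K * r ^ 2 * |r - 0| := h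
        _ = K * r ^ 2 * r := by rw [sub_zero, abs_of_pos hr0]
    · intro s hs
      rw [uIoc_of_le hr0.le] at hs
      rw [Real.norm_eq_abs]
      exact key α s hs.1 hs.2
  have h2 := intervalIntegral.norm_integral_le_of_norm_le_const (C := K * r ^ 2 * r)
    (f := fun α => (∫ s in (0:ℝ)..r,
        s * dotP (D (s * cos α, Φ (s * cos α, s * sin α) + Δl, s * sin α))
          (p1 Φ (s * cos α, s * sin α), -1, p2 Φ (s * cos α, s * sin α))) - r ^ 2 / 2 * c₀)
    (a := 0) (b := 2 * π) (fun α _ => by rw [Real.norm_eq_abs]; exact bound1 α)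
  rw [Real.norm_eq_abs] at h2
  calc _ ≤ K * r ^ 2 * r * |2 * π - 0| := h2
    _ = 2 * π * K * r ^ 3 := by
        rw [sub_zero, abs_of_pos (by positivity : (0:ℝ) < 2 * π)]
        ring
end
end

section
/- Let D : ℝ³ → ℝ³ be C¹ with ∇D bounded and let Φ be C² as above. Then the flux of D through the lateral surface Δ_side of the curved cylinder of radius r and half-height Δl satisfies |∫_{Δ_side} D · n_side dA| ≤ c · r² · Δl, where c depends only on the bound on ∇D; in particular (1/(πr²))∫_{Δ_side} D · n_side dA → 0 as Δl → 0. -/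
open Set Real Filter Topology intervalIntegral

noncomputable section

/-- Flux of D through the lateral surface Δ_side of the curved cylinder of
radius r and half-height Δl. -/
def sideFlux (Φ : ℝ × ℝ → ℝ) (D : ℝ × ℝ × ℝ → ℝ × ℝ × ℝ) (r Δl : ℝ) : ℝ :=
  ∫ h in (-Δl)..Δl, ∫ α in (0:ℝ)..(2 * π),
    r * dotP (D (r * cos α, Φ (r * cos α, r * sin α) + h, r * sin α))
      (-cos α, 0, -sin α)

set_option maxHeartbeats 1000000
/-- The lateral flux satisfies |∫_{Δ_side} D·n dA| ≤ c·r²·Δl with c depending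
only on the bound on ∇D; in particular (1/(πr²))·(lateral flux) → 0 as Δl → 0. -/
theorem stmt_5 (r M : ℝ) (hr : 0 < r) (hM : 0 < M)
    (Φ : ℝ × ℝ → ℝ) (hΦ : ContDiff ℝ 2 Φ)
    (hΦ0 : Φ (0, 0) = 0) (hΦ1 : fderiv ℝ Φ (0, 0) = 0)
    (hΦb : ∀ q, ‖fderiv ℝ Φ q‖ ≤ M ∧ ‖fderiv ℝ (fderiv ℝ Φ) q‖ ≤ M)
    (D : ℝ × ℝ × ℝ → ℝ × ℝ × ℝ) (hD : ContDiff ℝ 1 D)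
    (hDb : ∀ p, ‖fderiv ℝ D p‖ ≤ M) :
    (∃ c > 0, ∀ Δl > (0:ℝ), |sideFlux Φ D r Δl| ≤ c * r ^ 2 * Δl) ∧
    Tendsto (fun Δl => (1 / (π * r ^ 2)) * sideFlux Φ D r Δl) (𝓝[>] 0) (𝓝 0) := by
  have hDc : Continuous D := hD.continuous
  have hΦc : Continuous Φ := hΦ.continuous
  -- Lipschitz bound for D
  have lipD : ∀ x y : ℝ × ℝ × ℝ, ‖D x - D y‖ ≤ M * ‖x - y‖ := by
    intro x y
    exact Convex.norm_image_sub_le_of_norm_fderiv_le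
      (fun z _ => (hD.differentiable one_ne_zero).differentiableAt)
      (fun z _ => hDb z) convex_univ (mem_univ y) (mem_univ x)
  -- bound on Φ
  have hΦbd : ∀ q : ℝ × ℝ, |Φ q| ≤ M * ‖q‖ := by
    intro q
    have := Convex.norm_image_sub_le_of_norm_fderiv_le
      (fun z _ => ((hΦ.differentiable (by norm_num)).differentiableAt))
      (fun z _ => (hΦb z).1) convex_univ (mem_univ ((0,0) : ℝ × ℝ)) (mem_univ q)
    have h0 : Φ 0 = 0 := hΦ0
    simpa [h0, show ((0,0) : ℝ × ℝ) = 0 from rfl] using this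
  set C : ℝ := 2 * M * (1 + M) * r ^ 2 with hC
  have hCpos : 0 < C := by positivity
  -- integrand continuity
  have hcont : ∀ h : ℝ, Continuous (fun α : ℝ =>
      r * dotP (D (r * cos α, Φ (r * cos α, r * sin α) + h, r * sin α))
        (-cos α, 0, -sin α)) := by
    intro h
    unfold dotP
    fun_prop
  have hcontb : ∀ h : ℝ, Continuous (fun α : ℝ =>
      r * dotP (D (0, h, 0)) (-cos α, 0, -sin α)) := by
    intro h
    unfold dotP
    fun_prop
  -- base integral vanishes
  have hbase : ∀ h : ℝ, (∫ α in (0:ℝ)..(2 * π),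
      r * dotP (D (0, h, 0)) (-cos α, 0, -sin α)) = 0 := by
    intro h
    have : (fun α : ℝ => r * dotP (D (0, h, 0)) (-cos α, 0, -sin α))
        = fun α : ℝ => (-(r * (D (0, h, 0)).1)) * cos α
            + (-(r * (D (0, h, 0)).2.2)) * sin α := by
      funext α; simp [dotP]; ring
    rw [this, intervalIntegral.integral_add
      ((show Continuous fun α : ℝ => (-(r * (D (0, h, 0)).1)) * cos α from continuous_const.mul continuous_cos).intervalIntegrable _ _)
      ((show Continuous fun α : ℝ => (-(r * (D (0, h, 0)).2.2)) * sin α from continuous_const.mul continuous_sin).intervalIntegrable _ _),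
      intervalIntegral.integral_const_mul, intervalIntegral.integral_const_mul,
      integral_cos, integral_sin]
    simp [Real.sin_two_pi, Real.cos_two_pi]
  -- pointwise bound
  have hptw : ∀ h α : ℝ,
      |r * dotP (D (r * cos α, Φ (r * cos α, r * sin α) + h, r * sin α))
          (-cos α, 0, -sin α)
        - r * dotP (D (0, h, 0)) (-cos α, 0, -sin α)| ≤ C := by
    intro h α
    set P : ℝ × ℝ × ℝ := (r * cos α, Φ (r * cos α, r * sin α) + h, r * sin α)
    set Q : ℝ × ℝ × ℝ := (0, h, 0)
    have hPQ : ‖P - Q‖ ≤ (1 + M) * r := by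
      have h1 : |r * cos α| ≤ r := by
        rw [abs_mul, abs_of_pos hr]
        nlinarith [abs_cos_le_one α, hr.le, abs_nonneg (cos α)]
      have h2 : |r * sin α| ≤ r := by
        rw [abs_mul, abs_of_pos hr]
        nlinarith [abs_sin_le_one α, hr.le, abs_nonneg (sin α)]
      have hq : ‖((r * cos α, r * sin α) : ℝ × ℝ)‖ ≤ r := by
        rw [Prod.norm_def]
        exact max_le h1 h2
      have hΦq : |Φ (r * cos α, r * sin α)| ≤ M * r := by
        calc |Φ (r * cos α, r * sin α)| ≤ M * ‖((r * cos α, r * sin α) : ℝ × ℝ)‖ :=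
              hΦbd _
          _ ≤ M * r := by nlinarith
      have hPQ' : P - Q = (r * cos α, Φ (r * cos α, r * sin α), r * sin α) := by
        simp [P, Q, Prod.ext_iff]
      rw [hPQ', Prod.norm_def, Prod.norm_def]
      have e1 : r ≤ (1 + M) * r := by nlinarith
      have e2 : M * r ≤ (1 + M) * r := by nlinarith
      refine max_le ?_ (max_le ?_ ?_)
      · show ‖r * cos α‖ ≤ (1 + M) * r
        rw [Real.norm_eq_abs]; exact h1.trans e1
      · show ‖Φ (r * cos α, r * sin α)‖ ≤ (1 + M) * r
        rw [Real.norm_eq_abs]; exact hΦq.trans e2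
      · show ‖r * sin α‖ ≤ (1 + M) * r
        rw [Real.norm_eq_abs]; exact h2.trans e1
    have hDPQ : ‖D P - D Q‖ ≤ M * ((1 + M) * r) := by
      calc ‖D P - D Q‖ ≤ M * ‖P - Q‖ := lipD P Q
        _ ≤ M * ((1 + M) * r) := by nlinarith
    set x : ℝ := (D P).1 - (D Q).1
    set y : ℝ := (D P).2.2 - (D Q).2.2
    have hx : |x| ≤ M * ((1 + M) * r) := by
      have : |x| ≤ ‖D P - D Q‖ := by
        simpa [x, Real.norm_eq_abs] using norm_fst_le (D P - D Q)
      linarith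
    have hy : |y| ≤ M * ((1 + M) * r) := by
      have h1 : |y| ≤ ‖(D P - D Q).2‖ := by
        simpa [y, Real.norm_eq_abs] using norm_snd_le (D P - D Q).2
      have h2 : ‖(D P - D Q).2‖ ≤ ‖D P - D Q‖ := norm_snd_le _
      linarith
    have heq : r * dotP (D P) (-cos α, 0, -sin α) - r * dotP (D Q) (-cos α, 0, -sin α)
        = r * (x * (-cos α) + y * (-sin α)) := by
      simp [dotP, x, y]; ring
    rw [heq, abs_mul, abs_of_pos hr]
    have hbd : |x * (-cos α) + y * (-sin α)| ≤ |x| + |y| := by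
      calc |x * (-cos α) + y * (-sin α)| ≤ |x * (-cos α)| + |y * (-sin α)| := abs_add_le _ _
        _ ≤ |x| + |y| := by
            rw [abs_mul, abs_mul, abs_neg, abs_neg]
            have := abs_cos_le_one α
            have := abs_sin_le_one α
            nlinarith [abs_nonneg x, abs_nonneg y]
    have : |x| + |y| ≤ 2 * (M * ((1 + M) * r)) := by linarith
    calc r * |x * (-cos α) + y * (-sin α)| ≤ r * (2 * (M * ((1 + M) * r))) := by nlinarith
      _ = C := by rw [hC]; ring
  -- inner integral bound
  have hinner : ∀ h : ℝ,
      |∫ α in (0:ℝ)..(2 * π),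
        r * dotP (D (r * cos α, Φ (r * cos α, r * sin α) + h, r * sin α))
          (-cos α, 0, -sin α)| ≤ C * (2 * π) := by
    intro h
    have hsplit : (∫ α in (0:ℝ)..(2 * π),
        r * dotP (D (r * cos α, Φ (r * cos α, r * sin α) + h, r * sin α))
          (-cos α, 0, -sin α))
      = ∫ α in (0:ℝ)..(2 * π),
        (r * dotP (D (r * cos α, Φ (r * cos α, r * sin α) + h, r * sin α))
          (-cos α, 0, -sin α)
        - r * dotP (D (0, h, 0)) (-cos α, 0, -sin α)) := by
      rw [intervalIntegral.integral_sub ((hcont h).intervalIntegrable _ _)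
        ((hcontb h).intervalIntegrable _ _), hbase h, sub_zero]
    rw [hsplit]
    have := intervalIntegral.norm_integral_le_of_norm_le_const
      (C := C) (a := (0:ℝ)) (b := 2 * π)
      (f := fun α => r * dotP (D (r * cos α, Φ (r * cos α, r * sin α) + h, r * sin α))
          (-cos α, 0, -sin α) - r * dotP (D (0, h, 0)) (-cos α, 0, -sin α))
      (fun α _ => by rw [Real.norm_eq_abs]; exact hptw h α)
    have hπ : |2 * π - 0| = 2 * π := by
      rw [sub_zero, abs_of_pos (by positivity)]
    rw [hπ] at this
    rw [← Real.norm_eq_abs]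
    exact this
  -- main estimate
  have hmain : ∀ Δl > (0:ℝ), |sideFlux Φ D r Δl| ≤ (8 * π * M * (1 + M)) * r ^ 2 * Δl := by
    intro Δl hΔl
    have := intervalIntegral.norm_integral_le_of_norm_le_const
      (C := C * (2 * π)) (a := -Δl) (b := Δl)
      (f := fun h => ∫ α in (0:ℝ)..(2 * π),
        r * dotP (D (r * cos α, Φ (r * cos α, r * sin α) + h, r * sin α))
          (-cos α, 0, -sin α))
      (fun h _ => by rw [Real.norm_eq_abs]; exact hinner h)
    have habs : |Δl - (-Δl)| = 2 * Δl := by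
      rw [sub_neg_eq_add, abs_of_pos (by linarith)]; ring
    rw [habs] at this
    calc |sideFlux Φ D r Δl| ≤ C * (2 * π) * (2 * Δl) := by
          unfold sideFlux
          rw [← Real.norm_eq_abs]
          exact this
      _ = (8 * π * M * (1 + M)) * r ^ 2 * Δl := by rw [hC]; ring
  refine ⟨⟨8 * π * M * (1 + M), by positivity, hmain⟩, ?_⟩
  have hKpos : (0:ℝ) < π * r ^ 2 := by positivity
  apply squeeze_zero_norm'
    (a := fun Δl : ℝ => (1 / (π * r ^ 2)) * ((8 * π * M * (1 + M)) * r ^ 2 * Δl))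
  · filter_upwards [self_mem_nhdsWithin] with Δl hΔl
    have h1 := hmain Δl hΔl
    have h2 : (0:ℝ) ≤ 1 / (π * r ^ 2) := by positivity
    rw [Real.norm_eq_abs, abs_mul, abs_of_nonneg h2]
    exact mul_le_mul_of_nonneg_left h1 h2
  · have : Tendsto (fun Δl : ℝ => (1 / (π * r ^ 2)) * ((8 * π * M * (1 + M)) * r ^ 2 * Δl))
        (𝓝 0) (𝓝 ((1 / (π * r ^ 2)) * ((8 * π * M * (1 + M)) * r ^ 2 * 0))) :=
      (Continuous.tendsto (by fun_prop) 0)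
    simpa using this.mono_left nhdsWithin_le_nhds
end
end
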